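/- Let β̂_{s,1j} and β̂_{p,1j} denote the j-th components of the straPP and power-prior posterior-mean estimators, and suppose the percent bias PercentBias(β̂_{p,1j}) = (E[β̂_{p,1j}] − β₁ⱼ)/β₁ⱼ is nonzero and β₁ⱼ ≠ 0. Then under the normal–normal data-generating distribution with the straPP transformation assumption β₀ = (σ₀/σ₁)β₁, the mean-squared error satisfies MSE(β̂_{s,1j}) ≤ MSE(β̂_{p,1j}) if and only if (Var(β̂_{s,1j}) − Var(β̂_{p,1j})) / (PercentBias(β̂_{p,1j}))² ≤ β₁ⱼ², where MSE(T) = E[(T − β₁ⱼ)²] and Var is the variance under the data-generating distribution. -/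

import Mathlib

open MeasureTheory ProbabilityTheory Matrix

noncomputable section

/-- The normal–normal data-generating distribution: the product probability measure on
`(Fin n₀ → ℝ) × (Fin n₁ → ℝ)` under which the components `Y₀ i ~ N((X₀ β₀) i, σ₀²)` and
`Y₁ i ~ N((X₁ β₁) i, σ₁²)` are all independent. -/
def dataMeasure {n₀ n₁ p : ℕ} (X₀ : Matrix (Fin n₀) (Fin p) ℝ)
    (X₁ : Matrix (Fin n₁) (Fin p) ℝ) (σ₀ σ₁ : ℝ) (β₀ β₁ : Fin p → ℝ) :
    Measure ((Fin n₀ → ℝ) × (Fin n₁ → ℝ)) :=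
  (Measure.pi fun i => gaussianReal (X₀.mulVec β₀ i) ((σ₀ ^ 2).toNNReal)).prod
    (Measure.pi fun i => gaussianReal (X₁.mulVec β₁ i) ((σ₁ ^ 2).toNNReal))

/-- The straPP posterior-mean estimator
`β̂_s = Σ_s((1/σ₁²)X₁ᵀY₁ + (a₀/(σ₀σ₁))X₀ᵀY₀)` with `Σ_s = σ₁²(X₁ᵀX₁ + a₀X₀ᵀX₀)⁻¹`. -/
def strapEst {n₀ n₁ p : ℕ} (X₀ : Matrix (Fin n₀) (Fin p) ℝ)
    (X₁ : Matrix (Fin n₁) (Fin p) ℝ) (σ₀ σ₁ a₀ : ℝ)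
    (y : (Fin n₀ → ℝ) × (Fin n₁ → ℝ)) : Fin p → ℝ :=
  (σ₁ ^ 2 • (X₁ᵀ * X₁ + a₀ • (X₀ᵀ * X₀))⁻¹).mulVec
    ((1 / σ₁ ^ 2) • X₁ᵀ.mulVec y.2 + (a₀ / (σ₀ * σ₁)) • X₀ᵀ.mulVec y.1)

/-- The power-prior posterior-mean estimator
`β̂_p = Σ_p((1/σ₁²)X₁ᵀY₁ + (a₀/σ₀²)X₀ᵀY₀)` with
`Σ_p = ((1/σ₁²)X₁ᵀX₁ + (a₀/σ₀²)X₀ᵀX₀)⁻¹`. -/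
def ppEst {n₀ n₁ p : ℕ} (X₀ : Matrix (Fin n₀) (Fin p) ℝ)
    (X₁ : Matrix (Fin n₁) (Fin p) ℝ) (σ₀ σ₁ a₀ : ℝ)
    (y : (Fin n₀ → ℝ) × (Fin n₁ → ℝ)) : Fin p → ℝ :=
  ((1 / σ₁ ^ 2) • (X₁ᵀ * X₁) + (a₀ / σ₀ ^ 2) • (X₀ᵀ * X₀))⁻¹.mulVec
    ((1 / σ₁ ^ 2) • X₁ᵀ.mulVec y.2 + (a₀ / σ₀ ^ 2) • X₀ᵀ.mulVec y.1)


open Real MeasureTheory ProbabilityTheory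
open scoped NNReal ENNReal

section AuxGaussian
variable {v : ℝ≥0} {m : ℝ}

variable {v : ℝ≥0} {m : ℝ}

lemma pdf0_eq (v : ℝ≥0) (x : ℝ) :
    gaussianPDFReal 0 v x = (√(2 * π * v))⁻¹ * rexp (-(2 * (v:ℝ))⁻¹ * x ^ 2) := by
  rw [gaussianPDFReal, sub_zero]
  ring_nf

lemma int_pdf0_mul_id (hv : v ≠ 0) :
    Integrable (fun x => gaussianPDFReal 0 v x * x) := by
  have hv' : (0:ℝ) < (v:ℝ) := by positivity
  have hb : (0:ℝ) < (2 * (v:ℝ))⁻¹ := by positivity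
  simp_rw [pdf0_eq, mul_assoc]
  refine Integrable.const_mul ?_ _
  simpa [mul_comm] using integrable_mul_exp_neg_mul_sq hb

lemma int_pdf0_mul_sq (hv : v ≠ 0) :
    Integrable (fun x => gaussianPDFReal 0 v x * x ^ 2) := by
  have hv' : (0:ℝ) < (v:ℝ) := by positivity
  have hb : (0:ℝ) < (2 * (v:ℝ))⁻¹ := by positivity
  simp_rw [pdf0_eq, mul_assoc]
  refine Integrable.const_mul ?_ _
  have h := integrable_rpow_mul_exp_neg_mul_sq hb (s := 2) (by norm_num)
  have h2 : ∀ x : ℝ, x ^ (2:ℝ) = x ^ 2 := fun x => by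
    rw [show (2:ℝ) = ((2:ℕ):ℝ) by norm_num, Real.rpow_natCast]
  simpa [h2, mul_comm] using h

lemma mp_add (m : ℝ) : MeasurePreserving (fun x : ℝ => x + m) volume volume :=
  ⟨measurable_add_const m, map_add_right_eq_self volume m⟩

lemma emb_add (m : ℝ) : MeasurableEmbedding (fun x : ℝ => x + m) :=
  (Homeomorph.addRight m).measurableEmbedding

lemma int_pdf_mul_id (hv : v ≠ 0) (m : ℝ) :
    Integrable (fun x => gaussianPDFReal m v x * x) := by
  rw [← (mp_add m).integrable_comp_emb (emb_add m)]
  have : (fun x => gaussianPDFReal m v x * x) ∘ (fun x : ℝ => x + m)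
      = fun x => gaussianPDFReal 0 v x * x + m * gaussianPDFReal 0 v x := by
    funext x
    simp only [Function.comp_apply, gaussianPDFReal_add, sub_self]
    ring
  rw [this]
  exact (int_pdf0_mul_id hv).add ((integrable_gaussianPDFReal 0 v).const_mul m)

lemma int_pdf_mul_sq (hv : v ≠ 0) (m : ℝ) :
    Integrable (fun x => gaussianPDFReal m v x * x ^ 2) := by
  rw [← (mp_add m).integrable_comp_emb (emb_add m)]
  have : (fun x => gaussianPDFReal m v x * x ^ 2) ∘ (fun x : ℝ => x + m)
      = fun x => gaussianPDFReal 0 v x * x ^ 2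
          + ((2 * m) * (gaussianPDFReal 0 v x * x) + (m ^ 2) * gaussianPDFReal 0 v x) := by
    funext x
    simp only [Function.comp_apply, gaussianPDFReal_add, sub_self]
    ring
  rw [this]
  exact (int_pdf0_mul_sq hv).add (((int_pdf0_mul_id hv).const_mul _).add
    ((integrable_gaussianPDFReal 0 v).const_mul _))

lemma integral_pdf0_mul_id (v : ℝ≥0) : ∫ x, gaussianPDFReal 0 v x * x = 0 := by
  have h : ∀ x : ℝ, gaussianPDFReal 0 v (-x) * (-x) = -(gaussianPDFReal 0 v x * x) := by
    intro x
    rw [pdf0_eq, pdf0_eq]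
    ring_nf
  have := MeasureTheory.integral_neg_eq_self (fun x => gaussianPDFReal 0 v x * x) volume
  simp_rw [h] at this
  rw [integral_neg] at this
  linarith

lemma integral_pdf_mul_id (hv : v ≠ 0) (m : ℝ) :
    ∫ x, gaussianPDFReal m v x * x = m := by
  rw [← (mp_add m).integral_comp (emb_add m)]
  have : ∀ x : ℝ, gaussianPDFReal m v (x + m) * (x + m)
      = gaussianPDFReal 0 v x * x + m * gaussianPDFReal 0 v x := by
    intro x
    rw [gaussianPDFReal_add, sub_self]
    ring
  simp_rw [this]
  rw [integral_add (int_pdf0_mul_id hv) ((integrable_gaussianPDFReal 0 v).const_mul m),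
    integral_pdf0_mul_id, integral_const_mul, integral_gaussianPDFReal_eq_one 0 hv]
  ring

lemma gaussianReal_withDensity (m : ℝ) (v : ℝ≥0) (hv : v ≠ 0) :
    gaussianReal m v
      = volume.withDensity fun x => ((gaussianPDFReal m v x).toNNReal : ℝ≥0∞) := by
  rw [gaussianReal_of_var_ne_zero m hv]
  rfl

lemma integral_gaussianReal_transfer (m : ℝ) (hv : v ≠ 0) (g : ℝ → ℝ) :
    ∫ x, g x ∂(gaussianReal m v) = ∫ x, gaussianPDFReal m v x * g x := by
  rw [gaussianReal_withDensity m v hv,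
    integral_withDensity_eq_integral_smul
      (by exact (measurable_gaussianPDFReal m v).real_toNNReal) g]
  congr 1
  funext x
  rw [NNReal.smul_def, smul_eq_mul, Real.coe_toNNReal _ (gaussianPDFReal_nonneg m v x)]

lemma integrable_gaussianReal_iff (m : ℝ) (hv : v ≠ 0) (g : ℝ → ℝ) :
    Integrable g (gaussianReal m v) ↔
      Integrable (fun x => gaussianPDFReal m v x * g x) volume := by
  rw [gaussianReal_withDensity m v hv,
    integrable_withDensity_iff_integrable_smul
      (by exact (measurable_gaussianPDFReal m v).real_toNNReal)]
  constructor <;> intro h <;> refine h.congr (Filter.Eventually.of_forall fun x => ?_) <;>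
    simp only [NNReal.smul_def, smul_eq_mul, Real.coe_toNNReal _ (gaussianPDFReal_nonneg m v x)]

lemma integral_id_gaussianReal' (m : ℝ) (hv : v ≠ 0) :
    ∫ x, x ∂(gaussianReal m v) = m := by
  rw [integral_gaussianReal_transfer m hv]
  exact integral_pdf_mul_id hv m

lemma memℒp_two_id_gaussianReal (m : ℝ) (hv : v ≠ 0) :
    MemLp (fun x : ℝ => x) 2 (gaussianReal m v) := by
  rw [show (fun x : ℝ => x) = id from rfl, memLp_two_iff_integrable_sq aestronglyMeasurable_id]
  simp only [id_eq]
  rw [integrable_gaussianReal_iff m hv]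
  exact int_pdf_mul_sq hv m

lemma pi_map_eval {ι : Type*} [Fintype ι] [DecidableEq ι] (μs : ι → Measure ℝ)
    [∀ i, IsProbabilityMeasure (μs i)] (i : ι) :
    (Measure.pi μs).map (fun y => y i) = μs i := by
  ext s hs
  rw [Measure.map_apply (measurable_pi_apply i) hs]
  have h : (fun y : ι → ℝ => y i) ⁻¹' s
      = Set.pi Set.univ (Function.update (fun _ => Set.univ) i s) := by
    ext y
    simp only [Set.mem_preimage, Set.mem_pi, Set.mem_univ, forall_true_left]
    constructor
    · intro hy j
      by_cases hj : j = i
      · subst hj; simpa using hy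
      · simp [Function.update_of_ne hj]
    · intro hy
      simpa using hy i
  rw [h, Measure.pi_pi]
  rw [Fintype.prod_eq_single i (fun j hj => by simp [Function.update_of_ne hj])]
  simp

lemma prod_map_fst {α β : Type*} [MeasurableSpace α] [MeasurableSpace β]
    (μ : Measure α) (ν : Measure β) [SigmaFinite μ] [IsProbabilityMeasure ν] :
    (μ.prod ν).map Prod.fst = μ := by
  rw [Measure.map_fst_prod]
  simp

lemma prod_map_snd {α β : Type*} [MeasurableSpace α] [MeasurableSpace β]
    (μ : Measure α) (ν : Measure β) [IsProbabilityMeasure μ] [SigmaFinite ν] :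
    (μ.prod ν).map Prod.snd = ν := by
  rw [Measure.map_snd_prod]
  simp

end AuxGaussian

section Coord

variable {n₀ n₁ p : ℕ} (X₀ : Matrix (Fin n₀) (Fin p) ℝ)
    (X₁ : Matrix (Fin n₁) (Fin p) ℝ) (σ₀ σ₁ : ℝ) (β₀ β₁ : Fin p → ℝ)

instance : IsProbabilityMeasure (dataMeasure X₀ X₁ σ₀ σ₁ β₀ β₁) := by
  unfold dataMeasure; infer_instance

lemma map_coord1 (i : Fin n₀) :
    (dataMeasure X₀ X₁ σ₀ σ₁ β₀ β₁).map (fun y => y.1 i)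
      = gaussianReal (X₀.mulVec β₀ i) ((σ₀ ^ 2).toNNReal) := by
  have : (fun y : (Fin n₀ → ℝ) × (Fin n₁ → ℝ) => y.1 i)
      = (fun z : Fin n₀ → ℝ => z i) ∘ Prod.fst := rfl
  rw [this, ← Measure.map_map (measurable_pi_apply i) measurable_fst]
  unfold dataMeasure
  rw [prod_map_fst, pi_map_eval]

lemma map_coord2 (i : Fin n₁) :
    (dataMeasure X₀ X₁ σ₀ σ₁ β₀ β₁).map (fun y => y.2 i)
      = gaussianReal (X₁.mulVec β₁ i) ((σ₁ ^ 2).toNNReal) := by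
  have : (fun y : (Fin n₀ → ℝ) × (Fin n₁ → ℝ) => y.2 i)
      = (fun z : Fin n₁ → ℝ => z i) ∘ Prod.snd := rfl
  rw [this, ← Measure.map_map (measurable_pi_apply i) measurable_snd]
  unfold dataMeasure
  rw [prod_map_snd, pi_map_eval]

lemma v_ne_zero {σ : ℝ} (hσ : 0 < σ) : (σ ^ 2).toNNReal ≠ 0 := by
  simp only [ne_eq, Real.toNNReal_eq_zero, not_le]
  positivity

lemma memℒp_coord1 (hσ₀ : 0 < σ₀) (i : Fin n₀) :
    MemLp (fun y : (Fin n₀ → ℝ) × (Fin n₁ → ℝ) => y.1 i) 2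
      (dataMeasure X₀ X₁ σ₀ σ₁ β₀ β₁) := by
  have h := memℒp_two_id_gaussianReal (X₀.mulVec β₀ i) (v_ne_zero hσ₀)
  rw [← map_coord1 X₀ X₁ σ₀ σ₁ β₀ β₁ i] at h
  exact (memLp_map_measure_iff aestronglyMeasurable_id
    ((measurable_pi_apply i).comp measurable_fst).aemeasurable).1 h

lemma memℒp_coord2 (hσ₁ : 0 < σ₁) (i : Fin n₁) :
    MemLp (fun y : (Fin n₀ → ℝ) × (Fin n₁ → ℝ) => y.2 i) 2
      (dataMeasure X₀ X₁ σ₀ σ₁ β₀ β₁) := by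
  have h := memℒp_two_id_gaussianReal (X₁.mulVec β₁ i) (v_ne_zero hσ₁)
  rw [← map_coord2 X₀ X₁ σ₀ σ₁ β₀ β₁ i] at h
  exact (memLp_map_measure_iff aestronglyMeasurable_id
    ((measurable_pi_apply i).comp measurable_snd).aemeasurable).1 h

lemma integral_coord1 (hσ₀ : 0 < σ₀) (i : Fin n₀) :
    ∫ y, y.1 i ∂(dataMeasure X₀ X₁ σ₀ σ₁ β₀ β₁) = X₀.mulVec β₀ i := by
  have h : ∫ x, x ∂((dataMeasure X₀ X₁ σ₀ σ₁ β₀ β₁).map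
        (fun y : (Fin n₀ → ℝ) × (Fin n₁ → ℝ) => y.1 i))
      = ∫ y, y.1 i ∂(dataMeasure X₀ X₁ σ₀ σ₁ β₀ β₁) :=
    integral_map (((measurable_pi_apply i).comp measurable_fst).aemeasurable)
      aestronglyMeasurable_id
  rw [map_coord1, integral_id_gaussianReal' _ (v_ne_zero hσ₀)] at h
  exact h.symm

lemma integral_coord2 (hσ₁ : 0 < σ₁) (i : Fin n₁) :
    ∫ y, y.2 i ∂(dataMeasure X₀ X₁ σ₀ σ₁ β₀ β₁) = X₁.mulVec β₁ i := by
  have h : ∫ x, x ∂((dataMeasure X₀ X₁ σ₀ σ₁ β₀ β₁).map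
        (fun y : (Fin n₀ → ℝ) × (Fin n₁ → ℝ) => y.2 i))
      = ∫ y, y.2 i ∂(dataMeasure X₀ X₁ σ₀ σ₁ β₀ β₁) :=
    integral_map (((measurable_pi_apply i).comp measurable_snd).aemeasurable)
      aestronglyMeasurable_id
  rw [map_coord2, integral_id_gaussianReal' _ (v_ne_zero hσ₁)] at h
  exact h.symm

lemma memℒp_lin (hσ₀ : 0 < σ₀) (hσ₁ : 0 < σ₁) (a : Fin n₀ → ℝ) (b : Fin n₁ → ℝ) :
    MemLp (fun y : (Fin n₀ → ℝ) × (Fin n₁ → ℝ) =>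
      (∑ i, a i * y.1 i) + ∑ i, b i * y.2 i) 2 (dataMeasure X₀ X₁ σ₀ σ₁ β₀ β₁) :=
  (memLp_finset_sum Finset.univ fun i _ =>
      (memℒp_coord1 X₀ X₁ σ₀ σ₁ β₀ β₁ hσ₀ i).const_mul (a i)).add
    (memLp_finset_sum Finset.univ fun i _ =>
      (memℒp_coord2 X₀ X₁ σ₀ σ₁ β₀ β₁ hσ₁ i).const_mul (b i))

lemma integral_lin (hσ₀ : 0 < σ₀) (hσ₁ : 0 < σ₁) (a : Fin n₀ → ℝ) (b : Fin n₁ → ℝ) :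
    ∫ y, ((∑ i, a i * y.1 i) + ∑ i, b i * y.2 i) ∂(dataMeasure X₀ X₁ σ₀ σ₁ β₀ β₁)
      = (∑ i, a i * X₀.mulVec β₀ i) + ∑ i, b i * X₁.mulVec β₁ i := by
  have h1 : ∀ i : Fin n₀, Integrable (fun y : (Fin n₀ → ℝ) × (Fin n₁ → ℝ) => a i * y.1 i)
      (dataMeasure X₀ X₁ σ₀ σ₁ β₀ β₁) := fun i =>
    ((memℒp_coord1 X₀ X₁ σ₀ σ₁ β₀ β₁ hσ₀ i).const_mul (a i)).integrable one_le_two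
  have h2 : ∀ i : Fin n₁, Integrable (fun y : (Fin n₀ → ℝ) × (Fin n₁ → ℝ) => b i * y.2 i)
      (dataMeasure X₀ X₁ σ₀ σ₁ β₀ β₁) := fun i =>
    ((memℒp_coord2 X₀ X₁ σ₀ σ₁ β₀ β₁ hσ₁ i).const_mul (b i)).integrable one_le_two
  rw [integral_add (integrable_finset_sum _ fun i _ => h1 i)
    (integrable_finset_sum _ fun i _ => h2 i),
    integral_finset_sum _ fun i _ => h1 i, integral_finset_sum _ fun i _ => h2 i]
  congr 1
  · exact Finset.sum_congr rfl fun i _ => by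
      rw [integral_const_mul, integral_coord1 X₀ X₁ σ₀ σ₁ β₀ β₁ hσ₀ i]
  · exact Finset.sum_congr rfl fun i _ => by
      rw [integral_const_mul, integral_coord2 X₀ X₁ σ₀ σ₁ β₀ β₁ hσ₁ i]

end Coord

lemma est_repr {n₀ n₁ p : ℕ} (X₀ : Matrix (Fin n₀) (Fin p) ℝ)
    (X₁ : Matrix (Fin n₁) (Fin p) ℝ) (M : Matrix (Fin p) (Fin p) ℝ) (c₁ c₂ : ℝ)
    (j : Fin p) (z : (Fin n₀ → ℝ) × (Fin n₁ → ℝ)) :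
    (M.mulVec (c₂ • X₁ᵀ.mulVec z.2 + c₁ • X₀ᵀ.mulVec z.1)) j
      = (∑ i, (∑ k, M j k * (c₁ * X₀ᵀ k i)) * z.1 i)
        + ∑ i, (∑ k, M j k * (c₂ * X₁ᵀ k i)) * z.2 i := by
  simp only [mulVec, dotProduct, Pi.add_apply, Pi.smul_apply, smul_eq_mul, mul_add,
    Finset.mul_sum, Finset.sum_add_distrib, Finset.sum_mul]
  rw [add_comm]
  congr 1
  · rw [Finset.sum_comm]
    exact Finset.sum_congr rfl fun i _ => Finset.sum_congr rfl fun k _ => by ring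
  · rw [Finset.sum_comm]
    exact Finset.sum_congr rfl fun i _ => Finset.sum_congr rfl fun k _ => by ring

lemma strap_mean {n₀ n₁ p : ℕ} (X₀ : Matrix (Fin n₀) (Fin p) ℝ)
    (X₁ : Matrix (Fin n₁) (Fin p) ℝ) (σ₀ σ₁ a₀ : ℝ) (hσ₀ : σ₀ ≠ 0) (hσ₁ : σ₁ ≠ 0)
    (hs : IsUnit (X₁ᵀ * X₁ + a₀ • (X₀ᵀ * X₀)).det) (β₁ : Fin p → ℝ) :
    strapEst X₀ X₁ σ₀ σ₁ a₀ (X₀.mulVec ((σ₀ / σ₁) • β₁), X₁.mulVec β₁) = β₁ := by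
  unfold strapEst
  have hw : (1 / σ₁ ^ 2) • X₁ᵀ.mulVec (X₁.mulVec β₁)
        + (a₀ / (σ₀ * σ₁)) • X₀ᵀ.mulVec (X₀.mulVec ((σ₀ / σ₁) • β₁))
      = (1 / σ₁ ^ 2) • ((X₁ᵀ * X₁ + a₀ • (X₀ᵀ * X₀)).mulVec β₁) := by
    simp only [mulVec_smul, mulVec_mulVec]
    rw [add_mulVec, smul_mulVec, smul_add, smul_smul, smul_smul,
      show a₀ / (σ₀ * σ₁) * (σ₀ / σ₁) = 1 / σ₁ ^ 2 * a₀ by field_simp]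
  rw [hw, mulVec_smul, smul_mulVec, smul_smul, mulVec_mulVec,
    Matrix.nonsing_inv_mul _ hs, one_mulVec,
    show 1 / σ₁ ^ 2 * σ₁ ^ 2 = 1 by field_simp, one_smul]

lemma mse_decomp {Ω : Type*} [MeasurableSpace Ω] (μ : Measure Ω) [IsProbabilityMeasure μ]
    {f : Ω → ℝ} (hf : MemLp f 2 μ) (c : ℝ) :
    ∫ y, (f y - c) ^ 2 ∂μ = variance f μ + (∫ y, f y ∂μ - c) ^ 2 := by
  have hint : Integrable f μ := hf.integrable one_le_two
  have hsq : Integrable (fun y => f y ^ 2) μ := hf.integrable_sq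
  have h1 : ∫ y, (f y - c) ^ 2 ∂μ = ∫ y, ((f y ^ 2 - (2 * c) * f y) + c ^ 2) ∂μ :=
    integral_congr_ae (Filter.Eventually.of_forall fun y => by ring)
  have ha : Integrable (fun y => f y ^ 2 - 2 * c * f y) μ := hsq.sub (hint.const_mul (2 * c))
  have hb : Integrable (fun y => 2 * c * f y) μ := hint.const_mul (2 * c)
  rw [h1, integral_add ha (integrable_const _), integral_sub hsq hb,
    integral_const_mul, integral_const]
  have h2 := variance_eq_sub hf
  simp only [Pi.pow_apply] at h2
  simp only [measure_univ, probReal_univ, ENNReal.toReal_one, smul_eq_mul, one_mul]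
  rw [show ∫ y, f y ^ 2 ∂μ = variance f μ + (∫ y, f y ∂μ) ^ 2 by rw [h2]; ring]
  ring

/-- Theorem 1 of the paper: under the normal–normal data-generating distribution with the
straPP transformation assumption `β₀ = (σ₀/σ₁)β₁`, if `β₁ⱼ ≠ 0` and the percent bias of the
power-prior estimator is nonzero, then `MSE(β̂_{s,1j}) ≤ MSE(β̂_{p,1j})` if and only if
`(Var(β̂_{s,1j}) − Var(β̂_{p,1j})) / (PercentBias(β̂_{p,1j}))² ≤ β₁ⱼ²`. -/
theorem strapp_mse_le_pp_mse_iff {n₀ n₁ p : ℕ}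
    (X₀ : Matrix (Fin n₀) (Fin p) ℝ) (X₁ : Matrix (Fin n₁) (Fin p) ℝ)
    (σ₀ σ₁ a₀ : ℝ) (hσ₀ : 0 < σ₀) (hσ₁ : 0 < σ₁) (ha₀ : 0 < a₀) (ha₀' : a₀ ≤ 1)
    (hs : IsUnit (X₁ᵀ * X₁ + a₀ • (X₀ᵀ * X₀)).det)
    (hp : IsUnit ((1 / σ₁ ^ 2) • (X₁ᵀ * X₁) + (a₀ / σ₀ ^ 2) • (X₀ᵀ * X₀)).det)
    (β₁ : Fin p → ℝ) (j : Fin p) (hβ : β₁ j ≠ 0)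
    (μ : Measure ((Fin n₀ → ℝ) × (Fin n₁ → ℝ)))
    (hμ : μ = dataMeasure X₀ X₁ σ₀ σ₁ ((σ₀ / σ₁) • β₁) β₁)
    (hpb : (∫ y, ppEst X₀ X₁ σ₀ σ₁ a₀ y j ∂μ - β₁ j) / β₁ j ≠ 0) :
    (∫ y, (strapEst X₀ X₁ σ₀ σ₁ a₀ y j - β₁ j) ^ 2 ∂μ
        ≤ ∫ y, (ppEst X₀ X₁ σ₀ σ₁ a₀ y j - β₁ j) ^ 2 ∂μ) ↔
      (variance (fun y => strapEst X₀ X₁ σ₀ σ₁ a₀ y j) μ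
          - variance (fun y => ppEst X₀ X₁ σ₀ σ₁ a₀ y j) μ)
        / ((∫ y, ppEst X₀ X₁ σ₀ σ₁ a₀ y j ∂μ - β₁ j) / β₁ j) ^ 2
        ≤ (β₁ j) ^ 2 := by
  subst hμ
  haveI : IsProbabilityMeasure (dataMeasure X₀ X₁ σ₀ σ₁ ((σ₀ / σ₁) • β₁) β₁) := by
    unfold dataMeasure; infer_instance
  have hrs : ∀ z : (Fin n₀ → ℝ) × (Fin n₁ → ℝ), strapEst X₀ X₁ σ₀ σ₁ a₀ z j
      = (∑ i, (∑ k, ((σ₁ ^ 2 • (X₁ᵀ * X₁ + a₀ • (X₀ᵀ * X₀))⁻¹ : Matrix (Fin p) (Fin p) ℝ)) j k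
            * (a₀ / (σ₀ * σ₁) * X₀ᵀ k i)) * z.1 i)
        + ∑ i, (∑ k, ((σ₁ ^ 2 • (X₁ᵀ * X₁ + a₀ • (X₀ᵀ * X₀))⁻¹ : Matrix (Fin p) (Fin p) ℝ)) j k
            * (1 / σ₁ ^ 2 * X₁ᵀ k i)) * z.2 i :=
    fun z => est_repr X₀ X₁ _ (a₀ / (σ₀ * σ₁)) (1 / σ₁ ^ 2) j z
  have hrp : ∀ z : (Fin n₀ → ℝ) × (Fin n₁ → ℝ), ppEst X₀ X₁ σ₀ σ₁ a₀ z j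
      = (∑ i, (∑ k, (((1 / σ₁ ^ 2) • (X₁ᵀ * X₁) + (a₀ / σ₀ ^ 2) • (X₀ᵀ * X₀))⁻¹ : Matrix (Fin p) (Fin p) ℝ) j k
            * (a₀ / σ₀ ^ 2 * X₀ᵀ k i)) * z.1 i)
        + ∑ i, (∑ k, (((1 / σ₁ ^ 2) • (X₁ᵀ * X₁) + (a₀ / σ₀ ^ 2) • (X₀ᵀ * X₀))⁻¹ : Matrix (Fin p) (Fin p) ℝ) j k
            * (1 / σ₁ ^ 2 * X₁ᵀ k i)) * z.2 i :=
    fun z => est_repr X₀ X₁ _ (a₀ / σ₀ ^ 2) (1 / σ₁ ^ 2) j z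
  have hmem_s : MemLp (fun y => strapEst X₀ X₁ σ₀ σ₁ a₀ y j) 2
      (dataMeasure X₀ X₁ σ₀ σ₁ ((σ₀ / σ₁) • β₁) β₁) := by
    rw [show (fun y => strapEst X₀ X₁ σ₀ σ₁ a₀ y j) = _ from funext hrs]
    exact memℒp_lin X₀ X₁ σ₀ σ₁ ((σ₀ / σ₁) • β₁) β₁ hσ₀ hσ₁ _ _
  have hmem_p : MemLp (fun y => ppEst X₀ X₁ σ₀ σ₁ a₀ y j) 2
      (dataMeasure X₀ X₁ σ₀ σ₁ ((σ₀ / σ₁) • β₁) β₁) := by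
    rw [show (fun y => ppEst X₀ X₁ σ₀ σ₁ a₀ y j) = _ from funext hrp]
    exact memℒp_lin X₀ X₁ σ₀ σ₁ ((σ₀ / σ₁) • β₁) β₁ hσ₀ hσ₁ _ _
  have hint_s : ∫ y, strapEst X₀ X₁ σ₀ σ₁ a₀ y j
      ∂(dataMeasure X₀ X₁ σ₀ σ₁ ((σ₀ / σ₁) • β₁) β₁) = β₁ j := by
    simp only [hrs]
    rw [integral_lin X₀ X₁ σ₀ σ₁ ((σ₀ / σ₁) • β₁) β₁ hσ₀ hσ₁ _ _]
    have h2 := est_repr X₀ X₁ (σ₁ ^ 2 • (X₁ᵀ * X₁ + a₀ • (X₀ᵀ * X₀))⁻¹)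
      (a₀ / (σ₀ * σ₁)) (1 / σ₁ ^ 2) j
      (X₀.mulVec ((σ₀ / σ₁) • β₁), X₁.mulVec β₁)
    simp only at h2
    rw [← h2]
    exact congrFun (strap_mean X₀ X₁ σ₀ σ₁ a₀ hσ₀.ne' hσ₁.ne' hs β₁) j
  rw [mse_decomp _ hmem_s (β₁ j), mse_decomp _ hmem_p (β₁ j), hint_s, sub_self,
    show ((0:ℝ)) ^ 2 = 0 by norm_num, add_zero]
  set Vs := variance (fun y => strapEst X₀ X₁ σ₀ σ₁ a₀ y j)
    (dataMeasure X₀ X₁ σ₀ σ₁ ((σ₀ / σ₁) • β₁) β₁) with hVs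
  set Vp := variance (fun y => ppEst X₀ X₁ σ₀ σ₁ a₀ y j)
    (dataMeasure X₀ X₁ σ₀ σ₁ ((σ₀ / σ₁) • β₁) β₁) with hVp
  set E := ∫ y, ppEst X₀ X₁ σ₀ σ₁ a₀ y j
    ∂(dataMeasure X₀ X₁ σ₀ σ₁ ((σ₀ / σ₁) • β₁) β₁) with hE
  have hpb2 : (0:ℝ) < ((E - β₁ j) / β₁ j) ^ 2 :=
    lt_of_le_of_ne (sq_nonneg _) (Ne.symm (pow_ne_zero 2 hpb))
  have hc2 : β₁ j ^ 2 * (((E - β₁ j) / β₁ j) ^ 2) = (E - β₁ j) ^ 2 := by field_simp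
  rw [div_le_iff₀ hpb2, hc2]
  constructor <;> intro h <;> linarith
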